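/- Let y be the real 2×2 matrix with rows (0, −1) and (1, 0) and I₂ the 2×2 identity. For x ∈ {0,1} define the 16×16 real matrix (tensor factor order A, A', B, B') M_x := (1/16)·(I₁₆ − (−1)^x ((y ⊗ₖ I₂) ⊗ₖ (y ⊗ₖ I₂)) − ((I₂ ⊗ₖ y) ⊗ₖ (I₂ ⊗ₖ y)) + (−1)^x ((y ⊗ₖ y) ⊗ₖ (y ⊗ₖ y))), which is the reordering of ω_x^{AB} ⊗ ω₀^{A'B'} with ω_x = (1/4)(I₄ + (−1)^x Y₄) and ω₀ = (1/4)(I₄ + Y₄). For c ∈ {0,1} let e_c := (1/2)(I₄ + (−1)^c Y₄) = (1/2)(I₄ − (−1)^c (y ⊗ₖ y)). Then for all a, b ∈ {0,1}: trace((e_a ⊗ₖ e_b) * M_x) = (1/4)·(1 + (−1)^{a+b+x}). In particular p(0,0) = p(1,1) = (1/4)(1+(−1)^x) and p(0,1) = p(1,0) = (1/4)(1−(−1)^x), so the outcomes satisfy x = a ⊕ b, enabling LOCC decoding of the hidden bit with an extra pair carrying only tomographically-nonlocal entanglement. -/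
import Mathlib


open Matrix Kronecker

/-- The real 2×2 matrix with rows (0, −1) and (1, 0). -/
noncomputable def y : Matrix (Fin 2) (Fin 2) ℝ := !![0, -1; 1, 0]

/-- The real 4×4 matrix representing σ_y ⊗ σ_y. -/
noncomputable def Y₄ : Matrix (Fin 2 × Fin 2) (Fin 2 × Fin 2) ℝ := -(y ⊗ₖ y)

/-- The global 16×16 state (tensor factor order A, A', B, B'), the reordering of
ω_x^{AB} ⊗ ω₀^{A'B'} with ω_x = (1/4)(I₄ + (−1)^x Y₄) and ω₀ = (1/4)(I₄ + Y₄). -/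
noncomputable def Mx (x : Fin 2) :
    Matrix ((Fin 2 × Fin 2) × (Fin 2 × Fin 2)) ((Fin 2 × Fin 2) × (Fin 2 × Fin 2)) ℝ :=
  (1 / 16 : ℝ) •
    ((1 : Matrix ((Fin 2 × Fin 2) × (Fin 2 × Fin 2)) ((Fin 2 × Fin 2) × (Fin 2 × Fin 2)) ℝ)
      - ((-1 : ℝ) ^ (x : ℕ)) •
          ((y ⊗ₖ (1 : Matrix (Fin 2) (Fin 2) ℝ)) ⊗ₖ (y ⊗ₖ (1 : Matrix (Fin 2) (Fin 2) ℝ)))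
      - (((1 : Matrix (Fin 2) (Fin 2) ℝ) ⊗ₖ y) ⊗ₖ ((1 : Matrix (Fin 2) (Fin 2) ℝ) ⊗ₖ y))
      + ((-1 : ℝ) ^ (x : ℕ)) • ((y ⊗ₖ y) ⊗ₖ (y ⊗ₖ y)))

/-- The decoding effects e_c = (1/2)(I₄ + (−1)^c Y₄) = (1/2)(I₄ − (−1)^c (y ⊗ₖ y)). -/
noncomputable def eMeas (c : Fin 2) : Matrix (Fin 2 × Fin 2) (Fin 2 × Fin 2) ℝ :=
  (1 / 2 : ℝ) • ((1 : Matrix (Fin 2 × Fin 2) (Fin 2 × Fin 2) ℝ)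
    + ((-1 : ℝ) ^ (c : ℕ)) • Y₄)

/-- **LOCC decoding of the hidden bit with an extra TNL-entangled pair.**
Measuring e_a on the AA' pair and e_b on the BB' pair of the state M_x yields
outcome probabilities (1/4)(1 + (−1)^{a+b+x}); in particular the outcomes
satisfy x = a ⊕ b. -/
theorem stmt17 (x a b : Fin 2) :
    ((eMeas a ⊗ₖ eMeas b) * Mx x).trace
      = (1 / 4 : ℝ) * (1 + (-1 : ℝ) ^ ((a : ℕ) + (b : ℕ) + (x : ℕ))) := by
  have hyy : y * y = (-1 : Matrix (Fin 2) (Fin 2) ℝ) := by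
    ext i j
    fin_cases i <;> fin_cases j <;>
      simp [y, Matrix.mul_apply, Fin.sum_univ_succ, Matrix.one_apply]
  have hty : (y).trace = 0 := by simp [y, Matrix.trace, Fin.sum_univ_succ]
  have hY : (Y₄ : Matrix (Fin 2 × Fin 2) (Fin 2 × Fin 2) ℝ) = (-1 : ℝ) • (y ⊗ₖ y) := by
    rw [Y₄, neg_one_smul]
  have h4 : (1 : Matrix (Fin 2 × Fin 2) (Fin 2 × Fin 2) ℝ)
      = (1 : Matrix (Fin 2) (Fin 2) ℝ) ⊗ₖ (1 : Matrix (Fin 2) (Fin 2) ℝ) :=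
    (Matrix.one_kronecker_one).symm
  have h16 : (1 : Matrix ((Fin 2 × Fin 2) × (Fin 2 × Fin 2)) ((Fin 2 × Fin 2) × (Fin 2 × Fin 2)) ℝ)
      = ((1 : Matrix (Fin 2) (Fin 2) ℝ) ⊗ₖ (1 : Matrix (Fin 2) (Fin 2) ℝ))
        ⊗ₖ ((1 : Matrix (Fin 2) (Fin 2) ℝ) ⊗ₖ (1 : Matrix (Fin 2) (Fin 2) ℝ)) := by
    rw [Matrix.one_kronecker_one, Matrix.one_kronecker_one]
  simp only [eMeas, Mx, hY, h4, h16, Matrix.kronecker_smul, Matrix.smul_kronecker,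
    Matrix.kronecker_add, Matrix.add_kronecker]
  simp only [← Matrix.mul_kronecker_mul, Matrix.smul_mul, Matrix.mul_smul, Matrix.mul_add,
    Matrix.add_mul, Matrix.mul_sub, Matrix.sub_mul, Matrix.mul_one, Matrix.one_mul, hyy,
    smul_smul, Matrix.trace_add, Matrix.trace_sub, Matrix.trace_smul,
    Matrix.trace_kronecker, hty, Matrix.trace_neg, Matrix.trace_one]
  simp only [smul_eq_mul]
  fin_cases x <;> fin_cases a <;> fin_cases b <;> norm_num
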